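/- Let G : ℍ → ℂ be injective holomorphic such that G(z + 2πi) = G(z) + 2πi for every z ∈ ℍ, and such that G′(z) → 1 uniformly as Re z → +∞ (for every ε > 0 there is R with |G′(z) − 1| ≤ ε whenever Re z ≥ R). Then for every s > 0 there exists L ≥ 1 such that L^{−1}·|z − w| ≤ |G(z) − G(w)| ≤ L·|z − w| for all z, w with Re z ≥ s and Re w ≥ s; i.e. G is bi-Lipschitz on every half-plane {Re z ≥ s}, s > 0. -/

import Mathlib

open Complex Set
open Metric Filter
open scoped Topology

noncomputable section


/-- An injective holomorphic function on an open set has nonvanishing derivative. -/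
lemma deriv_ne_zero_of_injOn_aux {f : ℂ → ℂ} {U : Set ℂ} (hU : IsOpen U)
    (hf : DifferentiableOn ℂ f U) (hinj : InjOn f U) {z₀ : ℂ} (hz : z₀ ∈ U) :
    deriv f z₀ ≠ 0 := by
  intro h0
  have hfa : AnalyticAt ℂ f z₀ := hf.analyticOnNhd hU z₀ hz
  set g : ℂ → ℂ := fun z => f z - f z₀ with hgdef
  have hga : AnalyticAt ℂ g z₀ := hfa.sub analyticAt_const
  -- g is not eventually zero, by injectivity
  have hne : ¬ ∀ᶠ z in 𝓝 z₀, g z = 0 := by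
    intro h
    have h2 : ∀ᶠ z in 𝓝[≠] z₀, (g z = 0 ∧ z ∈ U) ∧ z ≠ z₀ :=
      ((h.and (hU.eventually_mem hz)).filter_mono nhdsWithin_le_nhds).and
        (eventually_mem_nhdsWithin)
    obtain ⟨z, ⟨hz1, hz2⟩, hz3⟩ := h2.exists
    exact hz3 (hinj hz2 hz (by have := hz1; simp only [hgdef] at this; linear_combination this))
  -- local normal form  g z = (z - z₀)^n • h z
  obtain ⟨n, h, h_an, h_ne, h_eq⟩ := hga.exists_eventuallyEq_pow_smul_nonzero_iff.mpr hne
  simp only [smul_eq_mul] at h_eq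
  -- n ≠ 0
  have hn0 : n ≠ 0 := by
    intro hn
    apply h_ne
    have := h_eq.self_of_nhds
    simp [hn, hgdef] at this
    exact this.symm
  -- n ≠ 1
  have hn1 : n ≠ 1 := by
    intro hn
    apply h_ne
    have hg0 : deriv g z₀ = 0 := by
      have : deriv g z₀ = deriv f z₀ := by
        simp only [hgdef]
        exact deriv_sub_const _
      rw [this, h0]
    have hder : HasDerivAt (fun z => (z - z₀) ^ n * h z) (h z₀) z₀ := by
      subst hn
      have h1 : HasDerivAt (fun z => (z - z₀) ^ 1 * h z)
          (1 * h z₀ + (z₀ - z₀) ^ 1 * deriv h z₀) z₀ := by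
        have : HasDerivAt (fun z : ℂ => (z - z₀) ^ 1) 1 z₀ := by
          simpa using ((hasDerivAt_id z₀).sub_const z₀)
        exact this.mul h_an.differentiableAt.hasDerivAt
      simpa using h1
    have : deriv g z₀ = h z₀ := by
      rw [Filter.EventuallyEq.deriv_eq h_eq, hder.deriv]
    rw [← this, hg0]
  have hn2 : 2 ≤ n := by omega
  have hnC : (n : ℂ) ≠ 0 := Nat.cast_ne_zero.mpr hn0
  set c : ℂ := h z₀ with hc
  set c₀ : ℂ := Complex.exp (Complex.log c / n) with hc₀
  have hc₀n : c₀ ^ n = c := by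
    rw [hc₀, ← Complex.exp_nat_mul, mul_div_cancel₀ _ hnC, Complex.exp_log h_ne]
  have hc₀ne : c₀ ≠ 0 := Complex.exp_ne_zero _
  set ρ : ℂ → ℂ := fun z => c₀ * Complex.exp (Complex.log (h z / c) / n) with hρ
  have hρz₀ : ρ z₀ = c₀ := by
    simp [hρ, ← hc, div_self h_ne, Complex.log_one]
  have hρa : AnalyticAt ℂ ρ z₀ := by
    apply AnalyticAt.mul analyticAt_const
    apply AnalyticAt.cexp
    apply AnalyticAt.div _ analyticAt_const hnC
    apply AnalyticAt.clog (h_an.div analyticAt_const h_ne)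
    simp [← hc, div_self h_ne, Complex.slitPlane]
  have hρn : ∀ᶠ z in 𝓝 z₀, ρ z ^ n = h z := by
    filter_upwards [h_an.continuousAt.eventually_ne h_ne] with z hzne
    have hdiv : h z / c ≠ 0 := div_ne_zero hzne h_ne
    rw [hρ, mul_pow, hc₀n, ← Complex.exp_nat_mul, mul_div_cancel₀ _ hnC,
      Complex.exp_log hdiv, mul_div_cancel₀ _ h_ne]
  set ψ : ℂ → ℂ := fun z => (z - z₀) * ρ z with hψdef
  have hψ0 : ψ z₀ = 0 := by simp [hψdef]
  have hψeq : ∀ᶠ z in 𝓝 z₀, f z = f z₀ + ψ z ^ n := by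
    filter_upwards [h_eq, hρn] with z h1 h2
    have : g z = ψ z ^ n := by rw [hψdef]; simp only [mul_pow, h2, h1]
    simp only [hgdef] at this
    linear_combination this
  have hψstrict : HasStrictDerivAt ψ c₀ z₀ := by
    have hρs : HasStrictDerivAt ρ (deriv ρ z₀) z₀ :=
      (hρa.contDiffAt (n := 1)).hasStrictDerivAt one_ne_zero
    have h1 : HasStrictDerivAt (fun z : ℂ => z - z₀) 1 z₀ := by
      exact (hasStrictDerivAt_id z₀).sub_const z₀
    have := h1.mul hρs
    simp [hρz₀] at this
    exact this
  -- local inverse of ψ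
  set Φ := (hψstrict.hasStrictFDerivAt_equiv hc₀ne).toOpenPartialHomeomorph ψ with hΦ
  have hΦcoe : (Φ : ℂ → ℂ) = ψ :=
    (hψstrict.hasStrictFDerivAt_equiv hc₀ne).toOpenPartialHomeomorph_coe
  have hΦz₀ : z₀ ∈ Φ.source :=
    (hψstrict.hasStrictFDerivAt_equiv hc₀ne).mem_toOpenPartialHomeomorph_source
  obtain ⟨O, hOsub, hOopen, hzO⟩ := _root_.eventually_nhds_iff.mp (hψeq.and (hU.eventually_mem hz))
  -- the image of a small open set is open and contains 0
  have hWopen : IsOpen (Φ '' (Φ.source ∩ O)) :=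
    Φ.isOpen_image_of_subset_source (Φ.open_source.inter hOopen) inter_subset_left
  have h0W : (0 : ℂ) ∈ Φ '' (Φ.source ∩ O) := by
    refine ⟨z₀, ⟨hΦz₀, hzO⟩, ?_⟩
    rw [hΦcoe] at *
    exact hψ0
  obtain ⟨ε, hε, hball⟩ := Metric.isOpen_iff.mp hWopen 0 h0W
  set ζ : ℂ := Complex.exp (2 * Real.pi * Complex.I / n) with hζ
  have hζn : ζ ^ n = 1 := by
    rw [hζ, ← Complex.exp_nat_mul, mul_div_cancel₀ _ hnC, Complex.exp_two_pi_mul_I]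
  have hζ1 : ζ ≠ 1 := by
    intro hcon
    rw [hζ, Complex.exp_eq_one_iff] at hcon
    obtain ⟨k, hk⟩ := hcon
    have h2pi : (2 * (Real.pi : ℂ) * Complex.I) ≠ 0 := by
      simp [Real.pi_ne_zero, Complex.I_ne_zero]
    have h1C : ((1 : ℤ) : ℂ) = ((k * n : ℤ) : ℂ) := by
      push_cast
      apply mul_right_cancel₀ h2pi
      rw [one_mul]
      have h2 : 2 * (Real.pi : ℂ) * Complex.I = ((k : ℂ) * (2 * Real.pi * Complex.I)) * n := by
        rw [← hk]; field_simp
      linear_combination h2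
    have h1 : (1 : ℤ) = k * n := Int.cast_injective h1C
    have : (n : ℤ) ∣ 1 := Dvd.intro_left k h1.symm
    have := Int.le_of_dvd one_pos this
    omega
  set t : ℂ := ((ε / 2 : ℝ) : ℂ) with ht
  have htne : t ≠ 0 := by
    rw [ht]
    norm_num
    positivity
  have htmem : t ∈ Metric.ball (0 : ℂ) ε := by
    rw [mem_ball_zero_iff, ht, Complex.norm_real, Real.norm_eq_abs,
      abs_of_pos (half_pos hε)]
    linarith
  have hζabs : ‖ζ‖ = 1 := by
    have h2 : (2 * (Real.pi : ℂ) * Complex.I / n) = ((2 * Real.pi / n : ℝ) : ℂ) * Complex.I := by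
      push_cast; ring
    rw [hζ, h2, Complex.norm_exp]
    simp
  have htζmem : t * ζ ∈ Metric.ball (0 : ℂ) ε := by
    rw [mem_ball_zero_iff] at htmem ⊢
    calc ‖t * ζ‖ = ‖t‖ * ‖ζ‖ := norm_mul t ζ
    _ = ‖t‖ * ‖ζ‖ := rfl
    _ = ‖t‖ := by rw [hζabs, mul_one]
    _ < ε := htmem
  obtain ⟨a, ⟨haS, haO⟩, haΦ⟩ := hball htmem
  obtain ⟨b, ⟨hbS, hbO⟩, hbΦ⟩ := hball htζmem
  rw [hΦcoe] at haΦ hbΦ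
  have hfa' : f a = f z₀ + t ^ n := by rw [(hOsub a haO).1, haΦ]
  have hfb' : f b = f z₀ + t ^ n := by
    rw [(hOsub b hbO).1, hbΦ, mul_pow, hζn, mul_one]
  have hab : a = b := hinj (hOsub a haO).2 (hOsub b hbO).2 (by rw [hfa', hfb'])
  have h3 : ψ a = ψ b := by rw [hab]
  rw [haΦ, hbΦ] at h3
  exact hζ1 (mul_left_cancel₀ htne (by rw [mul_one, ← h3])).symm


/-- The open right half-plane `ℍ = {z ∈ ℂ : Re z > 0}`. -/
def HalfPlane : Set ℂ := {z : ℂ | 0 < z.re}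

lemma isOpen_halfPlane : IsOpen HalfPlane := isOpen_lt continuous_const Complex.continuous_re

lemma convex_halfPlaneGe (r : ℝ) : Convex ℝ {z : ℂ | r ≤ z.re} := convex_halfSpace_re_ge r

lemma rect_subset_ball {a b c d : ℝ} :
    {z : ℂ | a ≤ z.re ∧ z.re ≤ b ∧ c ≤ z.im ∧ z.im ≤ d} ⊆
      Metric.closedBall 0 (|a| + |b| + |c| + |d|) := by
  rintro z ⟨h1, h2, h3, h4⟩
  rw [Metric.mem_closedBall, Complex.dist_eq, sub_zero]
  have h5 := Complex.norm_le_abs_re_add_abs_im z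
  have h6 : |z.re| ≤ |a| + |b| := by
    rw [abs_le]
    constructor
    · have := neg_abs_le a; have := abs_nonneg b; linarith
    · have := le_abs_self b; have := abs_nonneg a; linarith
  have h7 : |z.im| ≤ |c| + |d| := by
    rw [abs_le]
    constructor
    · have := neg_abs_le c; have := abs_nonneg d; linarith
    · have := le_abs_self d; have := abs_nonneg c; linarith
  linarith

lemma isCompact_rect {a b c d : ℝ} :
    IsCompact {z : ℂ | a ≤ z.re ∧ z.re ≤ b ∧ c ≤ z.im ∧ z.im ≤ d} := by
  apply (isCompact_closedBall (0 : ℂ) (|a| + |b| + |c| + |d|)).of_isClosed_subset _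
    rect_subset_ball
  have : {z : ℂ | a ≤ z.re ∧ z.re ≤ b ∧ c ≤ z.im ∧ z.im ≤ d}
      = Complex.re ⁻¹' (Icc a b) ∩ Complex.im ⁻¹' (Icc c d) := by
    ext z; simp [mem_Icc]; tauto
  rw [this]
  exact (isClosed_Icc.preimage Complex.continuous_re).inter
    (isClosed_Icc.preimage Complex.continuous_im)

/-- Mean value inequality for `G` with comparison slope `a` on a convex subset of the
half-plane. -/
lemma mv_aux {G : ℂ → ℂ} (hd : DifferentiableOn ℂ G HalfPlane)
    {S : Set ℂ} (hS : S ⊆ HalfPlane) (hconv : Convex ℝ S) (a : ℂ) {C : ℝ}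
    (hC : ∀ u ∈ S, ‖deriv G u - a‖ ≤ C) {z w : ℂ} (hz : z ∈ S) (hw : w ∈ S) :
    ‖(G z - G w) - a * (z - w)‖ ≤ C * ‖z - w‖ := by
  have hder : ∀ x ∈ S, HasDerivWithinAt (fun u => G u - a * u) (deriv G x - a) S x := by
    intro x hx
    have hGd : HasDerivAt G (deriv G x) x :=
      (hd.differentiableAt (isOpen_halfPlane.mem_nhds (hS hx))).hasDerivAt
    have ha : HasDerivAt (fun u : ℂ => a * u) a x := by
      simpa using (hasDerivAt_id x).const_mul a
    exact (hGd.sub ha).hasDerivWithinAt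
  have hb : ∀ x ∈ S, ‖deriv G x - a‖ ≤ C := fun x hx => hC x hx
  have hmv := hconv.norm_image_sub_le_of_norm_hasDerivWithin_le hder hb hw hz
  calc ‖(G z - G w) - a * (z - w)‖
      = ‖(G z - a * z) - (G w - a * w)‖ := by congr 1; ring
  _ ≤ C * ‖z - w‖ := hmv
  _ = C * ‖z - w‖ := rfl

/-- **Bi-Lipschitz property of 2πi-periodic conformal maps.**  If `G : ℍ → ℂ` is injective
holomorphic, commutes with the translation by `2πi`, and `G′(z) → 1` uniformly as
`Re z → +∞`, then `G` is bi-Lipschitz on every half-plane `{Re z ≥ s}`, `s > 0`. -/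
theorem periodic_conformal_biLipschitz (G : ℂ → ℂ)
    (hd : DifferentiableOn ℂ G HalfPlane) (hi : InjOn G HalfPlane)
    (hper : ∀ z ∈ HalfPlane, G (z + 2 * (Real.pi : ℂ) * Complex.I) =
      G z + 2 * (Real.pi : ℂ) * Complex.I)
    (hderiv : ∀ ε : ℝ, 0 < ε → ∃ R : ℝ, ∀ z : ℂ, R ≤ z.re →
      ‖deriv G z - 1‖ ≤ ε) :
    ∀ s : ℝ, 0 < s → ∃ L : ℝ, 1 ≤ L ∧
      ∀ z w : ℂ, s ≤ z.re → s ≤ w.re →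
        L⁻¹ * ‖z - w‖ ≤ ‖G z - G w‖ ∧
        ‖G z - G w‖ ≤ L * ‖z - w‖ := by
  intro s hs
  have hπ := Real.pi_pos
  have h2π := Real.two_pi_pos
  set p : ℂ := 2 * (Real.pi : ℂ) * Complex.I with hp
  have hkp : ∀ k : ℤ, (k : ℂ) * p = ((2 * Real.pi * k : ℝ) : ℂ) * Complex.I := by
    intro k; rw [hp]; push_cast; ring
  have hre : ∀ (k : ℤ) (z : ℂ), (z + k * p).re = z.re := by
    intro k z
    rw [Complex.add_re, hkp, Complex.mul_I_re]
    simp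
  have him : ∀ (k : ℤ) (z : ℂ), (z + k * p).im = z.im + 2 * Real.pi * k := by
    intro k z
    rw [Complex.add_im, hkp, Complex.mul_I_im]
    simp
  have hmemp : ∀ (k : ℤ) (z : ℂ), z ∈ HalfPlane → z + k * p ∈ HalfPlane := by
    intro k z hz
    show 0 < (z + k * p).re
    rw [hre]
    exact hz
  -- integer periodicity
  have htrans : ∀ (k : ℤ), ∀ z ∈ HalfPlane, G (z + k * p) = G z + k * p := by
    intro k
    induction k using Int.induction_on with
    | zero => intro z hz; simp
    | succ i ih =>
      intro z hz
      have h1 : z + (((i : ℤ) + 1 : ℤ) : ℂ) * p = (z + ((i : ℤ) : ℂ) * p) + p := by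
        push_cast; ring
      rw [h1, hper _ (hmemp i z hz), ih z hz]
      push_cast; ring
    | pred i ih =>
      intro z hz
      have h2 := hper _ (hmemp (-(i : ℤ) - 1) z hz)
      have h1 : (z + ((-(i : ℤ) - 1 : ℤ) : ℂ) * p) + p = z + ((-(i : ℤ) : ℤ) : ℂ) * p := by
        push_cast; ring
      rw [h1, ih z hz] at h2
      push_cast at h2 ⊢
      linear_combination -h2
  -- imaginary part reduction
  have hreduce : ∀ z : ℂ, ∃ k : ℤ, 0 ≤ (z + k * p).im ∧ (z + k * p).im ≤ 2 * Real.pi := by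
    intro z
    refine ⟨-⌊z.im / (2 * Real.pi)⌋, ?_, ?_⟩
    · rw [him]
      have := Int.sub_floor_div_mul_nonneg z.im h2π
      push_cast
      linarith
    · rw [him]
      have := Int.sub_floor_div_mul_lt z.im h2π
      push_cast
      linarith
  -- analyticity and continuity
  have han : AnalyticOnNhd ℂ G HalfPlane := hd.analyticOnNhd isOpen_halfPlane
  have hGcont : ContinuousOn G HalfPlane := hd.continuousOn
  have hderivCont : ContinuousOn (deriv G) HalfPlane := han.deriv.continuousOn
  -- derivative periodicity
  have hderivP : ∀ (k : ℤ), ∀ z ∈ HalfPlane, deriv G (z + k * p) = deriv G z := by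
    intro k z hz
    have hev : (fun w => G (w + k * p)) =ᶠ[nhds z] (fun w => G w + k * p) :=
      (isOpen_halfPlane.eventually_mem hz).mono (fun w hw => htrans k w hw)
    have h1 : deriv (fun w => G (w + k * p)) z = deriv G (z + k * p) :=
      deriv_comp_add_const G (k * p) z
    have h2 : deriv (fun w => G w + k * p) z = deriv G z := deriv_add_const _
    rw [← h1, hev.deriv_eq, h2]
  -- choose R with |G' - 1| ≤ 1/2 beyond R
  obtain ⟨R₀, hR₀⟩ := hderiv (1/2) (by norm_num)
  set R : ℝ := max R₀ (s + 1) with hR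
  have hsR : s ≤ R := le_trans (by linarith) (le_max_right _ _)
  have hfarSub : {z : ℂ | R ≤ z.re} ⊆ HalfPlane := by
    intro z hz
    have : s + 1 ≤ z.re := le_trans (le_max_right _ _) hz
    show 0 < z.re
    linarith
  have hsSub : {z : ℂ | s ≤ z.re} ⊆ HalfPlane := by
    intro z hz
    show 0 < z.re
    have : s ≤ z.re := hz
    linarith
  have hfar : ∀ z w : ℂ, R ≤ z.re → R ≤ w.re →
      ‖(G z - G w) - (z - w)‖ ≤ (1/2) * ‖z - w‖ := by
    intro z w hz hw
    have := mv_aux hd hfarSub (convex_halfPlaneGe R) 1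
      (C := 1/2) (fun u hu => hR₀ u (le_trans (le_max_left _ _) hu)) hz hw
    simpa using this
  -- bound |G z - z| on the fundamental strip
  have hK1c : IsCompact {z : ℂ | s ≤ z.re ∧ z.re ≤ R ∧ 0 ≤ z.im ∧ z.im ≤ 2 * Real.pi} :=
    isCompact_rect
  have hK1sub : {z : ℂ | s ≤ z.re ∧ z.re ≤ R ∧ 0 ≤ z.im ∧ z.im ≤ 2 * Real.pi} ⊆ HalfPlane :=
    fun z hz => hsSub hz.1
  have hK1ne : {z : ℂ | s ≤ z.re ∧ z.re ≤ R ∧ 0 ≤ z.im ∧ z.im ≤ 2 * Real.pi}.Nonempty := by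
    refine ⟨(s : ℂ), ?_⟩
    simp only [mem_setOf_eq, Complex.ofReal_re, Complex.ofReal_im]
    exact ⟨le_refl s, hsR, le_refl 0, by linarith⟩
  obtain ⟨zM, hzM, hzMax'⟩ := hK1c.exists_isMaxOn hK1ne
    (continuous_norm.comp_continuousOn
      ((hGcont.mono hK1sub).sub (continuousOn_id.mono hK1sub)))
  have hzMax : ∀ x ∈ {z : ℂ | s ≤ z.re ∧ z.re ≤ R ∧ 0 ≤ z.im ∧ z.im ≤ 2 * Real.pi},
      ‖G x - x‖ ≤ ‖G zM - zM‖ := fun x hx => hzMax' hx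
  set M : ℝ := max (‖G zM - zM‖) 1 with hM
  have hM1 : 1 ≤ M := le_max_right _ _
  have hMstrip : ∀ z : ℂ, s ≤ z.re → z.re ≤ R → ‖G z - z‖ ≤ M := by
    intro z hz1 hz2
    obtain ⟨k, hk1, hk2⟩ := hreduce z
    have hzH : z ∈ HalfPlane := hsSub hz1
    have hmem : z + k * p ∈ {z : ℂ | s ≤ z.re ∧ z.re ≤ R ∧ 0 ≤ z.im ∧ z.im ≤ 2 * Real.pi} := by
      refine ⟨?_, ?_, hk1, hk2⟩ <;> rw [hre] <;> assumption
    have heq : G (z + k * p) - (z + k * p) = G z - z := by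
      rw [htrans k z hzH]; ring
    have := le_trans (hzMax _ hmem) (le_max_left _ (1:ℝ))
    rw [heq] at this
    exact this
  have hMfar : ∀ w : ℂ, R ≤ w.re → ‖G w - w‖ ≤ M + (1/2) * (w.re - R) := by
    intro w hw
    set w₀ : ℂ := w - ((w.re - R : ℝ) : ℂ) with hw₀
    have hw₀re : w₀.re = R := by simp [hw₀]
    have h1 : ‖G w₀ - w₀‖ ≤ M := hMstrip w₀ (by rw [hw₀re]; exact hsR) (le_of_eq hw₀re)
    have h2 := hfar w w₀ hw (le_of_eq hw₀re.symm)
    have h3 : ‖w - w₀‖ = w.re - R := by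
      rw [hw₀]
      simp only [sub_sub_cancel]
      rw [Complex.norm_real, Real.norm_eq_abs]; exact abs_of_nonneg (by linarith)
    rw [h3] at h2
    have h4 : G w - w = (G w₀ - w₀) + ((G w - G w₀) - (w - w₀)) := by ring
    calc ‖G w - w‖ = ‖(G w₀ - w₀) + ((G w - G w₀) - (w - w₀))‖ := by
          rw [h4]
    _ ≤ ‖G w₀ - w₀‖ + ‖(G w - G w₀) - (w - w₀)‖ := norm_add_le _ _
    _ ≤ M + (1/2) * (w.re - R) := add_le_add h1 h2
  -- minimum of |G'| on the extended strip
  set R' : ℝ := R + 8 * M with hR'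
  have hRR' : R ≤ R' := by have := hM1; linarith
  have hK1'c : IsCompact {z : ℂ | s ≤ z.re ∧ z.re ≤ R' ∧ 0 ≤ z.im ∧ z.im ≤ 2 * Real.pi} :=
    isCompact_rect
  have hK1'sub : {z : ℂ | s ≤ z.re ∧ z.re ≤ R' ∧ 0 ≤ z.im ∧ z.im ≤ 2 * Real.pi} ⊆ HalfPlane :=
    fun z hz => hsSub hz.1
  have hK1'ne : {z : ℂ | s ≤ z.re ∧ z.re ≤ R' ∧ 0 ≤ z.im ∧ z.im ≤ 2 * Real.pi}.Nonempty := by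
    refine ⟨(s : ℂ), ?_⟩
    simp only [mem_setOf_eq, Complex.ofReal_re, Complex.ofReal_im]
    exact ⟨le_refl s, by linarith, le_refl 0, by linarith⟩
  obtain ⟨zm, hzm, hzmin'⟩ := hK1'c.exists_isMinOn hK1'ne
    (continuous_norm.comp_continuousOn (hderivCont.mono hK1'sub))
  have hzmin : ∀ x ∈ {z : ℂ | s ≤ z.re ∧ z.re ≤ R' ∧ 0 ≤ z.im ∧ z.im ≤ 2 * Real.pi},
      ‖deriv G zm‖ ≤ ‖deriv G x‖ := fun x hx => hzmin' hx
  set m : ℝ := ‖deriv G zm‖ with hm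
  have hmpos : 0 < m := by
    rw [hm]
    exact norm_pos_iff.mpr (deriv_ne_zero_of_injOn_aux isOpen_halfPlane hd hi (hK1'sub hzm))
  -- uniform continuity of G' on a compact neighborhood of the strip
  have hKpc : IsCompact {z : ℂ | s/2 ≤ z.re ∧ z.re ≤ R' + 1 ∧ -1 ≤ z.im ∧ z.im ≤ 2 * Real.pi + 1} :=
    isCompact_rect
  have hKpsub : {z : ℂ | s/2 ≤ z.re ∧ z.re ≤ R' + 1 ∧ -1 ≤ z.im ∧ z.im ≤ 2 * Real.pi + 1}
      ⊆ HalfPlane := by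
    intro z hz
    show 0 < z.re
    have := hz.1
    linarith
  have huc := hKpc.uniformContinuousOn_of_continuous (hderivCont.mono hKpsub)
  rw [Metric.uniformContinuousOn_iff] at huc
  obtain ⟨δ₀, hδ₀, hucd⟩ := huc (m/2) (by positivity)
  set δ : ℝ := min (min (δ₀/2) 1) (s/2) with hδ
  have hδpos : 0 < δ := by
    apply lt_min (lt_min (by linarith) one_pos) (by linarith)
  have hδ1 : δ ≤ 1 := le_trans (min_le_left _ _) (min_le_right _ _)
  have hδs2 : δ ≤ s/2 := min_le_right _ _
  have hδδ₀ : δ < δ₀ := lt_of_le_of_lt (le_trans (min_le_left _ _) (min_le_left _ _)) (by linarith)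
  -- near-diagonal lower bound, normalized imaginary part
  have hnear : ∀ z w : ℂ, s ≤ z.re → z.re ≤ R' → 0 ≤ z.im → z.im ≤ 2 * Real.pi →
      ‖z - w‖ ≤ δ → (m/2) * ‖z - w‖ ≤ ‖G z - G w‖ := by
    intro z w hz1 hz2 hz3 hz4 hzw
    have hzKp : z ∈ {z : ℂ | s/2 ≤ z.re ∧ z.re ≤ R' + 1 ∧ -1 ≤ z.im ∧ z.im ≤ 2 * Real.pi + 1} :=
      ⟨by linarith, by linarith, by linarith, by linarith⟩
    have hSsub : Metric.closedBall z δ ⊆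
        {z : ℂ | s/2 ≤ z.re ∧ z.re ≤ R' + 1 ∧ -1 ≤ z.im ∧ z.im ≤ 2 * Real.pi + 1} := by
      intro u hu
      rw [Metric.mem_closedBall, Complex.dist_eq] at hu
      have h1 : |(u - z).re| ≤ δ := le_trans (Complex.abs_re_le_norm _) hu
      have h2 : |(u - z).im| ≤ δ := le_trans (Complex.abs_im_le_norm _) hu
      rw [Complex.sub_re, abs_le] at h1
      rw [Complex.sub_im, abs_le] at h2
      refine ⟨by linarith [h1.1], by linarith [h1.2], by linarith [h2.1], by linarith [h2.2]⟩
    have hC : ∀ u ∈ Metric.closedBall z δ,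
        ‖deriv G u - deriv G z‖ ≤ m/2 := by
      intro u hu
      have hdist : dist u z < δ₀ :=
        lt_of_le_of_lt (Metric.mem_closedBall.mp hu) hδδ₀
      have := hucd u (hSsub hu) z hzKp hdist
      rw [Complex.dist_eq] at this
      exact le_of_lt this
    have hzS : z ∈ Metric.closedBall z δ := Metric.mem_closedBall_self (le_of_lt hδpos)
    have hwS : w ∈ Metric.closedBall z δ := by
      rw [Metric.mem_closedBall, Complex.dist_eq, ← norm_sub_rev]
      exact hzw
    have hmv := mv_aux hd (Subset.trans hSsub hKpsub) (convex_closedBall z δ)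
      (deriv G z) hC hzS hwS
    have hmz : m ≤ ‖deriv G z‖ := hzmin z ⟨hz1, hz2, hz3, hz4⟩
    have htri : ‖deriv G z * (z - w)‖ ≤
        ‖G z - G w‖ + ‖(G z - G w) - deriv G z * (z - w)‖ := by
      have heq : deriv G z * (z - w) =
          (G z - G w) + -((G z - G w) - deriv G z * (z - w)) := by ring
      calc ‖deriv G z * (z - w)‖
          = ‖(G z - G w) + -((G z - G w) - deriv G z * (z - w))‖ := by rw [← heq]
      _ ≤ ‖G z - G w‖ + ‖-((G z - G w) - deriv G z * (z - w))‖ :=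
          norm_add_le _ _
      _ = ‖G z - G w‖ + ‖(G z - G w) - deriv G z * (z - w)‖ := by
          rw [norm_neg]
    rw [norm_mul] at htri
    have h5 : m * ‖z - w‖ ≤ ‖deriv G z‖ * ‖z - w‖ :=
      mul_le_mul_of_nonneg_right hmz (norm_nonneg _)
    linarith
  -- near-diagonal lower bound, general form
  have hnear' : ∀ z w : ℂ, s ≤ z.re → z.re ≤ R' → ‖z - w‖ ≤ δ →
      (m/2) * ‖z - w‖ ≤ ‖G z - G w‖ := by
    intro z w hz1 hz2 hzw
    obtain ⟨k, hk1, hk2⟩ := hreduce z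
    have hzH : z ∈ HalfPlane := hsSub hz1
    have hwH : w ∈ HalfPlane := by
      show 0 < w.re
      have h1 : |(z - w).re| ≤ δ := le_trans (Complex.abs_re_le_norm _) hzw
      rw [Complex.sub_re, abs_le] at h1
      have := h1.2
      linarith
    have heq1 : (z + k * p) - (w + k * p) = z - w := by ring
    have heq2 : G (z + k * p) - G (w + k * p) = G z - G w := by
      rw [htrans k z hzH, htrans k w hwH]; ring
    have := hnear (z + k * p) (w + k * p) (by rw [hre]; exact hz1) (by rw [hre]; exact hz2)
      hk1 hk2 (by rw [heq1]; exact hzw)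
    rw [heq1, heq2] at this
    exact this
  -- mid-range: compactness and positivity
  set K₂ : Set (ℂ × ℂ) := {q : ℂ × ℂ |
      (s ≤ q.1.re ∧ q.1.re ≤ R ∧ 0 ≤ q.1.im ∧ q.1.im ≤ 2 * Real.pi) ∧
      s ≤ q.2.re ∧ δ ≤ ‖q.1 - q.2‖ ∧ ‖q.1 - q.2‖ ≤ 8 * M} with hK₂
  have hK₂closed : IsClosed K₂ := by
    have c1 : Continuous (fun q : ℂ × ℂ => q.1.re) := Complex.continuous_re.comp continuous_fst
    have c2 : Continuous (fun q : ℂ × ℂ => q.1.im) := Complex.continuous_im.comp continuous_fst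
    have c3 : Continuous (fun q : ℂ × ℂ => q.2.re) := Complex.continuous_re.comp continuous_snd
    have c4 : Continuous (fun q : ℂ × ℂ => ‖q.1 - q.2‖) :=
      continuous_norm.comp (continuous_fst.sub continuous_snd)
    have hset : K₂ = ((fun q : ℂ × ℂ => q.1.re) ⁻¹' Icc s R) ∩
        ((fun q : ℂ × ℂ => q.1.im) ⁻¹' Icc 0 (2 * Real.pi)) ∩
        ((fun q : ℂ × ℂ => q.2.re) ⁻¹' Ici s) ∩
        ((fun q : ℂ × ℂ => ‖q.1 - q.2‖) ⁻¹' Icc δ (8 * M)) := by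
      ext q
      simp only [hK₂, mem_setOf_eq, mem_inter_iff, mem_preimage, mem_Icc, mem_Ici]
      tauto
    rw [hset]
    exact (((isClosed_Icc.preimage c1).inter (isClosed_Icc.preimage c2)).inter
      (isClosed_Ici.preimage c3)).inter (isClosed_Icc.preimage c4)
  have hK₂compact : IsCompact K₂ := by
    set r₁ : ℝ := |s| + |R| + |(0:ℝ)| + |2 * Real.pi| with hr₁
    apply IsCompact.of_isClosed_subset
      ((isCompact_closedBall (0:ℂ) r₁).prod (isCompact_closedBall (0:ℂ) (r₁ + 8 * M)))
      hK₂closed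
    rintro ⟨z, w⟩ ⟨⟨h1, h2, h3, h4⟩, h5, h6, h7⟩
    constructor
    · exact rect_subset_ball ⟨h1, h2, h3, h4⟩
    · have hz1 : ‖z‖ ≤ r₁ := by
        have := rect_subset_ball (a := s) (b := R) (c := 0) (d := 2 * Real.pi) ⟨h1, h2, h3, h4⟩
        rw [Metric.mem_closedBall, Complex.dist_eq, sub_zero] at this
        exact this
      rw [Metric.mem_closedBall, Complex.dist_eq, sub_zero]
      calc ‖w‖ = ‖z - (z - w)‖ := by ring_nf
      _ ≤ ‖z‖ + ‖z - w‖ := by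
          calc ‖z - (z - w)‖ ≤ ‖z‖ + ‖-(z - w)‖ := by
                have : z - (z - w) = z + -(z - w) := by ring
                rw [this]
                exact norm_add_le _ _
          _ = ‖z‖ + ‖z - w‖ := by rw [norm_neg]
      _ ≤ r₁ + 8 * M := add_le_add hz1 h7
  have hK₂ne : K₂.Nonempty := by
    refine ⟨((s : ℂ), (s : ℂ) + (δ : ℂ)), ?_, ?_, ?_, ?_⟩
    · simp only [Complex.ofReal_re, Complex.ofReal_im]
      exact ⟨le_refl s, hsR, le_refl 0, by linarith⟩
    · simp only [Complex.add_re, Complex.ofReal_re]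
      linarith
    · have : ((s : ℂ)) - ((s : ℂ) + (δ : ℂ)) = -(δ : ℂ) := by ring
      rw [this, norm_neg, Complex.norm_real, Real.norm_eq_abs, abs_of_pos hδpos]
    · have : ((s : ℂ)) - ((s : ℂ) + (δ : ℂ)) = -(δ : ℂ) := by ring
      rw [this, norm_neg, Complex.norm_real, Real.norm_eq_abs, abs_of_pos hδpos]
      have : (1:ℝ) ≤ 8 * M := by linarith
      linarith
  have hK₂sub1 : ∀ q ∈ K₂, q.1 ∈ HalfPlane := fun q hq => hsSub hq.1.1
  have hK₂sub2 : ∀ q ∈ K₂, q.2 ∈ HalfPlane := fun q hq => hsSub hq.2.1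
  obtain ⟨q₀, hq₀, hq₀min'⟩ := hK₂compact.exists_isMinOn hK₂ne
    (continuous_norm.comp_continuousOn
      ((hGcont.comp continuous_fst.continuousOn hK₂sub1).sub
        (hGcont.comp continuous_snd.continuousOn hK₂sub2)))
  have hq₀min : ∀ q ∈ K₂, ‖G q₀.1 - G q₀.2‖ ≤ ‖G q.1 - G q.2‖ :=
    fun q hq => hq₀min' hq
  set c₂ : ℝ := ‖G q₀.1 - G q₀.2‖ with hc₂
  have hc₂pos : 0 < c₂ := by
    rw [hc₂]
    apply norm_pos_iff.mpr
    intro hcon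
    have hne : q₀.1 ≠ q₀.2 := by
      intro hcon2
      have := hq₀.2.2.1
      rw [hcon2, sub_self] at this
      simp at this
      linarith
    exact hne (hi (hK₂sub1 q₀ hq₀) (hK₂sub2 q₀ hq₀) (sub_eq_zero.mp hcon))
  -- mid-range lower bound, general form
  have hmid : ∀ z w : ℂ, s ≤ z.re → z.re ≤ R → s ≤ w.re → δ ≤ ‖z - w‖ →
      ‖z - w‖ ≤ 8 * M → c₂ ≤ ‖G z - G w‖ := by
    intro z w hz1 hz2 hw1 hd1 hd2
    obtain ⟨k, hk1, hk2⟩ := hreduce z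
    have hzH : z ∈ HalfPlane := hsSub hz1
    have hwH : w ∈ HalfPlane := hsSub hw1
    have heq1 : (z + k * p) - (w + k * p) = z - w := by ring
    have heq2 : G (z + k * p) - G (w + k * p) = G z - G w := by
      rw [htrans k z hzH, htrans k w hwH]; ring
    have hmem : ((z + k * p), (w + k * p)) ∈ K₂ := by
      refine ⟨⟨?_, ?_, hk1, hk2⟩, ?_, ?_, ?_⟩
      · rw [hre]; exact hz1
      · rw [hre]; exact hz2
      · rw [hre]; exact hw1
      · rw [heq1]; exact hd1
      · rw [heq1]; exact hd2
    have := hq₀min _ hmem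
    simp only at this
    rw [heq2] at this
    exact this
  -- far-range lower bound when z is in the strip
  have habs_tri : ∀ z w : ℂ, ‖z - w‖ ≤
      ‖G z - G w‖ + (‖G z - z‖ + ‖G w - w‖) := by
    intro z w
    have h1 : z - w = (G z - G w) + ((z - G z) + (G w - w)) := by ring
    calc ‖z - w‖
        = ‖(G z - G w) + ((z - G z) + (G w - w))‖ := by rw [← h1]
    _ ≤ ‖G z - G w‖ + ‖(z - G z) + (G w - w)‖ := norm_add_le _ _
    _ ≤ ‖G z - G w‖ + (‖z - G z‖ + ‖G w - w‖) := by
        linarith [norm_add_le (z - G z) (G w - w)]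
    _ = ‖G z - G w‖ + (‖G z - z‖ + ‖G w - w‖) := by
        rw [norm_sub_rev z (G z)]
  have hfarlow : ∀ z w : ℂ, s ≤ z.re → z.re ≤ R → s ≤ w.re →
      8 * M ≤ ‖z - w‖ → (1/4) * ‖z - w‖ ≤ ‖G z - G w‖ := by
    intro z w hz1 hz2 hw1 hdist
    have hMz : ‖G z - z‖ ≤ M := hMstrip z hz1 hz2
    have htri := habs_tri z w
    rcases le_total w.re R with hwR | hwR
    · have hMw : ‖G w - w‖ ≤ M := hMstrip w hw1 hwR
      linarith
    · have hMw : ‖G w - w‖ ≤ M + (1/2) * (w.re - R) := hMfar w hwR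
      have hwz : w.re - R ≤ ‖z - w‖ := by
        have h1 : |(w - z).re| ≤ ‖w - z‖ := Complex.abs_re_le_norm _
        rw [Complex.sub_re] at h1
        rw [norm_sub_rev]
        have := le_abs_self (w.re - z.re)
        linarith
      linarith
  -- combined lower bound constant
  set c : ℝ := min (min (1/2) (1/4)) (min (m/2) (c₂ / (8 * M))) with hc
  have hcpos : 0 < c := by
    apply lt_min (lt_min (by norm_num) (by norm_num))
    apply lt_min (by positivity) (by positivity)
  have hlowhalf : ∀ z w : ℂ, s ≤ z.re → z.re ≤ R → s ≤ w.re →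
      c * ‖z - w‖ ≤ ‖G z - G w‖ := by
    intro z w hz1 hz2 hw1
    have habs0 : 0 ≤ ‖z - w‖ := norm_nonneg _
    rcases le_total (‖z - w‖) δ with hcase | hcase
    · have := hnear' z w hz1 (le_trans hz2 hRR') hcase
      have hcm : c ≤ m/2 := le_trans (min_le_right _ _) (min_le_left _ _)
      calc c * ‖z - w‖ ≤ (m/2) * ‖z - w‖ :=
            mul_le_mul_of_nonneg_right hcm habs0
      _ ≤ ‖G z - G w‖ := this
    · rcases le_total (‖z - w‖) (8 * M) with hcase2 | hcase2
      · have hmid' := hmid z w hz1 hz2 hw1 hcase hcase2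
        have hcc : c ≤ c₂ / (8 * M) := le_trans (min_le_right _ _) (min_le_right _ _)
        have h8M : (0:ℝ) < 8 * M := by linarith
        calc c * ‖z - w‖ ≤ (c₂ / (8 * M)) * ‖z - w‖ :=
              mul_le_mul_of_nonneg_right hcc habs0
        _ ≤ (c₂ / (8 * M)) * (8 * M) := by
              apply mul_le_mul_of_nonneg_left hcase2
              positivity
        _ = c₂ := by field_simp
        _ ≤ ‖G z - G w‖ := hmid'
      · have := hfarlow z w hz1 hz2 hw1 hcase2
        have hcc : c ≤ 1/4 := le_trans (min_le_left _ _) (min_le_right _ _)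
        calc c * ‖z - w‖ ≤ (1/4) * ‖z - w‖ :=
              mul_le_mul_of_nonneg_right hcc habs0
        _ ≤ ‖G z - G w‖ := this
  have hlow : ∀ z w : ℂ, s ≤ z.re → s ≤ w.re →
      c * ‖z - w‖ ≤ ‖G z - G w‖ := by
    intro z w hz1 hw1
    have habs0 : 0 ≤ ‖z - w‖ := norm_nonneg _
    rcases le_total z.re R with hzR | hzR
    · exact hlowhalf z w hz1 hzR hw1
    · rcases le_total w.re R with hwR | hwR
      · have := hlowhalf w z hw1 hwR hz1
        rw [norm_sub_rev w z, norm_sub_rev (G w) (G z)]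
          at this
        exact this
      · -- both are far: use hfar
        have h1 := hfar z w hzR hwR
        have htri : ‖z - w‖ ≤
            ‖G z - G w‖ + ‖(G z - G w) - (z - w)‖ := by
          have heq : z - w = (G z - G w) + -((G z - G w) - (z - w)) := by ring
          calc ‖z - w‖
              = ‖(G z - G w) + -((G z - G w) - (z - w))‖ := by rw [← heq]
          _ ≤ ‖G z - G w‖ + ‖-((G z - G w) - (z - w))‖ :=
              norm_add_le _ _
          _ = ‖G z - G w‖ + ‖(G z - G w) - (z - w)‖ := by
              rw [norm_neg]
        have hcc : c ≤ 1/2 := le_trans (min_le_left _ _) (min_le_left _ _)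
        have : (1/2) * ‖z - w‖ ≤ ‖G z - G w‖ := by linarith
        calc c * ‖z - w‖ ≤ (1/2) * ‖z - w‖ :=
              mul_le_mul_of_nonneg_right hcc habs0
        _ ≤ ‖G z - G w‖ := this
  -- upper bound
  obtain ⟨zB, hzB, hzBmax'⟩ := hK1c.exists_isMaxOn hK1ne
    (continuous_norm.comp_continuousOn (hderivCont.mono hK1sub))
  have hzBmax : ∀ x ∈ {z : ℂ | s ≤ z.re ∧ z.re ≤ R ∧ 0 ≤ z.im ∧ z.im ≤ 2 * Real.pi},
      ‖deriv G x‖ ≤ ‖deriv G zB‖ := fun x hx => hzBmax' hx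
  set B : ℝ := max (‖deriv G zB‖) (3/2) with hB
  have hB0 : 0 ≤ B := le_trans (by norm_num) (le_max_right _ _)
  have hBbound : ∀ u : ℂ, s ≤ u.re → ‖deriv G u - 0‖ ≤ B := by
    intro u hu
    rw [sub_zero]
    rcases le_total u.re R with huR | huR
    · obtain ⟨k, hk1, hk2⟩ := hreduce u
      have huH : u ∈ HalfPlane := hsSub hu
      have := hzBmax (u + k * p) ⟨by rw [hre]; exact hu, by rw [hre]; exact huR, hk1, hk2⟩
      rw [hderivP k u huH] at this
      exact le_trans this (le_max_left _ _)
    · have h1 := hR₀ u (le_trans (le_max_left _ _) huR)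
      have h2 : ‖deriv G u‖ ≤ ‖deriv G u - 1‖ + ‖(1:ℂ)‖ := by
        have heq : deriv G u = (deriv G u - 1) + 1 := by ring
        calc ‖deriv G u‖ = ‖(deriv G u - 1) + 1‖ := by rw [← heq]
        _ ≤ ‖deriv G u - 1‖ + ‖(1:ℂ)‖ := norm_add_le _ _
      rw [norm_one] at h2
      have : ‖deriv G u‖ ≤ 3/2 := by linarith
      exact le_trans this (le_max_right _ _)
  have hupper : ∀ z w : ℂ, s ≤ z.re → s ≤ w.re →
      ‖G z - G w‖ ≤ B * ‖z - w‖ := by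
    intro z w hz1 hw1
    have := mv_aux hd hsSub (convex_halfPlaneGe s) 0 (fun u hu => hBbound u hu) hz1 hw1
    simpa using this
  -- conclusion
  refine ⟨max (max B c⁻¹) 1, le_max_right _ _, ?_⟩
  intro z w hz1 hw1
  have habs0 : 0 ≤ ‖z - w‖ := norm_nonneg _
  have hLpos : 0 < max (max B c⁻¹) 1 := lt_of_lt_of_le one_pos (le_max_right _ _)
  constructor
  · have hinvc : (max (max B c⁻¹) 1)⁻¹ ≤ c := by
      have h1 : c⁻¹ ≤ max (max B c⁻¹) 1 := le_trans (le_max_right _ _) (le_max_left _ _)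
      calc (max (max B c⁻¹) 1)⁻¹ ≤ (c⁻¹)⁻¹ := by
            apply inv_anti₀ (by positivity) h1
      _ = c := inv_inv c
    calc (max (max B c⁻¹) 1)⁻¹ * ‖z - w‖ ≤ c * ‖z - w‖ :=
          mul_le_mul_of_nonneg_right hinvc habs0
    _ ≤ ‖G z - G w‖ := hlow z w hz1 hw1
  · have hBL : B ≤ max (max B c⁻¹) 1 := le_trans (le_max_left _ _) (le_max_left _ _)
    calc ‖G z - G w‖ ≤ B * ‖z - w‖ := hupper z w hz1 hw1
    _ ≤ (max (max B c⁻¹) 1) * ‖z - w‖ := mul_le_mul_of_nonneg_right hBL habs0
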